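/- Let D = (D_A, D_B, D_C) be a partite 3-uniform hypergraph degree sequence with the degrees in D_A listed in non-increasing order, let α be the average of the degrees in D_A, let k = ⌈α⌉, and let m satisfy m·k + (|D_A| − m)·(k−1) = α·|D_A|. Let D_A′ be the sequence consisting of m copies of k followed by |D_A| − m copies of k−1. Then every realization H of D can be transformed by a finite series of hinge-flip operations (each acting on the A-coordinate of a hyperedge) into a realization of the third almost-regular degree sequence D′ = (D_A′, D_B, D_C). -/

import Mathlib

open Finset

variable {B C : Type*} [Fintype B] [Fintype C] [DecidableEq B] [DecidableEq C]

/-- Degree of a vertex `a` of the first class in a partite 3-uniform hypergraph. -/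
def hDegA {n₁ : ℕ} (E : Finset (Fin n₁ × B × C)) (a : Fin n₁) : ℕ :=
  (E.filter fun e => e.1 = a).card

/-- Degree of a vertex `b ∈ B`. -/
def hDegB {n₁ : ℕ} (E : Finset (Fin n₁ × B × C)) (b : B) : ℕ :=
  (E.filter fun e => e.2.1 = b).card

/-- Degree of a vertex `c ∈ C`. -/
def hDegC {n₁ : ℕ} (E : Finset (Fin n₁ × B × C)) (c : C) : ℕ :=
  (E.filter fun e => e.2.2 = c).card

/-- A hinge-flip operation acting on the `A`-coordinate of a hyperedge: the hyperedge
`(a,b,c)` is removed and the hyperedge `(a',b,c)`, not previously present, is added. -/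
def IsHingeFlipA {n₁ : ℕ} (E E' : Finset (Fin n₁ × B × C)) : Prop :=
  ∃ a a' b c, (a, b, c) ∈ E ∧ (a', b, c) ∉ E ∧
    E' = insert (a', b, c) (E.erase (a, b, c))

/- ---------------- Auxiliary lemmas ---------------- -/

lemma hDegA_flip {n₁ : ℕ} (E : Finset (Fin n₁ × B × C)) (a a' : Fin n₁) (b : B) (c : C)
    (h1 : (a,b,c) ∈ E) (h2 : (a',b,c) ∉ E) (i : Fin n₁) :
    hDegA (insert (a',b,c) (E.erase (a,b,c))) i
      = if i = a' then hDegA E i + 1 else if i = a then hDegA E i - 1 else hDegA E i := by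
  have hne : a ≠ a' := by rintro rfl; exact h2 h1
  unfold hDegA
  rw [Finset.filter_insert, Finset.filter_erase]
  by_cases hia' : i = a'
  · subst hia'
    rw [if_pos rfl, if_pos rfl]
    rw [Finset.erase_eq_of_notMem (by simp [hne])]
    rw [Finset.card_insert_of_notMem (by simp [h2])]
  · rw [if_neg (by simpa using (Ne.symm hia'))]
    by_cases hia : i = a
    · subst hia
      rw [if_pos rfl, if_neg hia']
      rw [Finset.card_erase_of_mem (by simp [h1])]
    · rw [if_neg hia', if_neg hia]
      rw [Finset.erase_eq_of_notMem (by simp [Ne.symm hia])]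

lemma hDegB_flip {n₁ : ℕ} (E : Finset (Fin n₁ × B × C)) (a a' : Fin n₁) (b : B) (c : C)
    (h1 : (a,b,c) ∈ E) (h2 : (a',b,c) ∉ E) (b₀ : B) :
    hDegB (insert (a',b,c) (E.erase (a,b,c))) b₀ = hDegB E b₀ := by
  unfold hDegB
  rw [Finset.filter_insert, Finset.filter_erase]
  by_cases hb : b = b₀
  · rw [if_pos hb]
    rw [Finset.card_insert_of_notMem (by simp [h2])]
    rw [Finset.card_erase_of_mem (by subst hb; simp [h1])]
    have : 0 < (E.filter fun e => e.2.1 = b₀).card :=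
      Finset.card_pos.2 ⟨(a,b,c), by subst hb; simp [h1]⟩
    omega
  · rw [if_neg hb, Finset.erase_eq_of_notMem (by simp [hb])]

lemma hDegC_flip {n₁ : ℕ} (E : Finset (Fin n₁ × B × C)) (a a' : Fin n₁) (b : B) (c : C)
    (h1 : (a,b,c) ∈ E) (h2 : (a',b,c) ∉ E) (c₀ : C) :
    hDegC (insert (a',b,c) (E.erase (a,b,c))) c₀ = hDegC E c₀ := by
  unfold hDegC
  rw [Finset.filter_insert, Finset.filter_erase]
  by_cases hc : c = c₀
  · rw [if_pos hc]
    rw [Finset.card_insert_of_notMem (by simp [h2])]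
    rw [Finset.card_erase_of_mem (by subst hc; simp [h1])]
    have : 0 < (E.filter fun e => e.2.2 = c₀).card :=
      Finset.card_pos.2 ⟨(a,b,c), by subst hc; simp [h1]⟩
    omega
  · rw [if_neg hc, Finset.erase_eq_of_notMem (by simp [hc])]

lemma sum_hDegA {n₁ : ℕ} (E : Finset (Fin n₁ × B × C)) : ∑ i, hDegA E i = E.card := by
  unfold hDegA
  exact (Finset.card_eq_sum_card_fiberwise (f := Prod.fst) (t := univ)
    (fun x _ => mem_univ _)).symm

lemma exists_lt_of_sum_eq {n : ℕ} (f g : Fin n → ℕ) (h : ∑ i, f i = ∑ i, g i)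
    (a : Fin n) (ha : g a < f a) : ∃ j, f j < g j := by
  by_contra h'
  push_neg at h'
  have := Finset.sum_lt_sum (fun i _ => h' i) ⟨a, mem_univ a, ha⟩
  omega

/-- The key induction: if the target `d'` is "almost flat" and has the same total as
the current `A`-degree sequence, hinge flips reach it. -/
lemma hflip_key {n₁ : ℕ} (d' : Fin n₁ → ℕ) (hd' : ∀ i j, d' j ≤ d' i + 1) :
    ∀ N (E : Finset (Fin n₁ × B × C)),
      (∑ i, ((hDegA E i : ℤ) - (d' i : ℤ)).natAbs) ≤ N →
      (∑ i, hDegA E i) = ∑ i, d' i →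
      ∃ E', Relation.ReflTransGen IsHingeFlipA E E' ∧
        (∀ i, hDegA E' i = d' i) ∧ (∀ b, hDegB E' b = hDegB E b) ∧
        (∀ c, hDegC E' c = hDegC E c) := by
  intro N
  induction N with
  | zero =>
    intro E hμ _
    refine ⟨E, .refl, fun i => ?_, fun _ => rfl, fun _ => rfl⟩
    have h0 := (Finset.sum_eq_zero_iff.1 (Nat.le_zero.1 hμ)) i (mem_univ i)
    omega
  | succ N ih =>
    intro E hμ hsum
    by_cases hall : ∀ i, hDegA E i = d' i
    · exact ⟨E, .refl, hall, fun _ => rfl, fun _ => rfl⟩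
    push_neg at hall
    obtain ⟨a₀, ha₀⟩ := hall
    -- find a surplus vertex `a` and a deficit vertex `a'`
    have hex : (∃ a, d' a < hDegA E a) ∧ (∃ a', hDegA E a' < d' a') := by
      rcases lt_trichotomy (hDegA E a₀) (d' a₀) with h | h | h
      · exact ⟨exists_lt_of_sum_eq d' (hDegA E) hsum.symm a₀ h, ⟨a₀, h⟩⟩
      · exact absurd h ha₀
      · exact ⟨⟨a₀, h⟩, exists_lt_of_sum_eq (hDegA E) d' hsum a₀ h⟩
    obtain ⟨⟨a, ha⟩, ⟨a', ha'⟩⟩ := hex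
    have hlt : hDegA E a' < hDegA E a := by have := hd' a a'; omega
    -- find an edge at `a` whose hinge can be moved to `a'`
    have hbc : ∃ b c, (a,b,c) ∈ E ∧ (a',b,c) ∉ E := by
      by_contra hcon
      push_neg at hcon
      have hle : (E.filter fun e => e.1 = a).card ≤ (E.filter fun e => e.1 = a').card := by
        apply Finset.card_le_card_of_injOn (fun e => (a', e.2))
        · intro e he
          rw [mem_coe, mem_filter] at he
          obtain ⟨x, b, c⟩ := e
          obtain ⟨he1, he2⟩ := he
          simp only at he2
          subst he2
          exact mem_filter.2 ⟨hcon b c he1, rfl⟩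
        · intro e₁ h₁ e₂ h₂ hee
          simp only [mem_filter, coe_filter, Set.mem_setOf_eq] at h₁ h₂
          have hee' : ((a', e₁.2) : Fin n₁ × B × C) = (a', e₂.2) := hee
          have h2 : e₁.2 = e₂.2 := (Prod.mk.injEq _ _ _ _ ▸ hee' : a' = a' ∧ e₁.2 = e₂.2).2
          exact Prod.ext (h₁.2.trans h₂.2.symm) h2
      unfold hDegA at hlt
      omega
    obtain ⟨b, c, hbc1, hbc2⟩ := hbc
    set E' := insert (a',b,c) (E.erase (a,b,c)) with hE'
    have hstep : IsHingeFlipA E E' := ⟨a, a', b, c, hbc1, hbc2, rfl⟩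
    have hne : a ≠ a' := by intro h; subst h; omega
    -- total degree is preserved
    have hsum' : ∑ i, hDegA E' i = ∑ i, d' i := by
      rw [sum_hDegA]
      have hc : E'.card = E.card := by
        rw [hE', Finset.card_insert_of_notMem (fun h => hbc2 (mem_of_mem_erase h)),
          Finset.card_erase_of_mem hbc1]
        have : 0 < E.card := card_pos.2 ⟨_, hbc1⟩
        omega
      rw [hc, ← sum_hDegA E]
      exact hsum
    -- the measure drops by 2
    have hkey : ∀ i, ((hDegA E' i : ℤ) - (d' i : ℤ)).natAbs + (if i = a' ∨ i = a then 1 else 0)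
        = ((hDegA E i : ℤ) - (d' i : ℤ)).natAbs := by
      intro i
      rw [hE', hDegA_flip E a a' b c hbc1 hbc2 i]
      by_cases h1 : i = a'
      · subst h1
        rw [if_pos rfl, if_pos (Or.inl rfl)]
        omega
      · rw [if_neg h1]
        by_cases h2 : i = a
        · subst h2
          rw [if_pos rfl, if_pos (Or.inr rfl)]
          omega
        · rw [if_neg h2, if_neg (by tauto)]
          omega
    have hμ' : (∑ i, ((hDegA E' i : ℤ) - (d' i : ℤ)).natAbs) ≤ N := by
      have hs := Finset.sum_congr rfl (fun i (_ : i ∈ univ) => (hkey i).symm)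
      rw [Finset.sum_add_distrib] at hs
      have hind : (∑ i, (if i = a' ∨ i = a then 1 else 0)) = 2 := by
        rw [Finset.sum_boole]
        have : (univ.filter fun i => i = a' ∨ i = a) = {a', a} := by
          ext x; simp [mem_insert]
        rw [this, Finset.card_insert_of_notMem (by simp [Ne.symm hne]), Finset.card_singleton]
        norm_num
      rw [hind] at hs
      omega
    obtain ⟨E'', hchain, hdegs, hB, hC⟩ := ih E' hμ' hsum'
    exact ⟨E'', Relation.ReflTransGen.head hstep hchain, hdegs,
      fun b₀ => (hB b₀).trans (hDegB_flip E a a' b c hbc1 hbc2 b₀),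
      fun c₀ => (hC c₀).trans (hDegC_flip E a a' b c hbc1 hbc2 c₀)⟩

/-- with `D_A` non-increasing, `α` the average of `D_A`, `k = ⌈α⌉` and
`m` with `m·k + (n₁−m)·(k−1) = α·n₁`, every realization `H` of `D = (D_A, D_B, D_C)`
can be transformed by a finite series of `A`-coordinate hinge flips into a realization
of the third almost-regular degree sequence `D′ = (D_A′, D_B, D_C)`, where `D_A′`
consists of `m` copies of `k` followed by `n₁ − m` copies of `k−1`. -/
theorem hingeflip_to_third_almost_regular {n₁ : ℕ}
    (dA : Fin n₁ → ℕ) (dB : B → ℕ) (dC : C → ℕ)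
    (hmono : Antitone dA)
    (α : ℚ) (hα : α = (∑ i, (dA i : ℚ)) / n₁)
    (k : ℕ) (hk : k = ⌈α⌉₊)
    (m : ℕ) (hm : m ≤ n₁)
    (hmk : (m : ℚ) * k + ((n₁ : ℚ) - m) * ((k : ℚ) - 1) = α * n₁)
    (dA' : Fin n₁ → ℕ) (hdA' : dA' = fun i : Fin n₁ => if (i : ℕ) < m then k else k - 1)
    (H : Finset (Fin n₁ × B × C))
    (hHA : ∀ a, hDegA H a = dA a) (hHB : ∀ b, hDegB H b = dB b)
    (hHC : ∀ c, hDegC H c = dC c) :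
    ∃ H' : Finset (Fin n₁ × B × C),
      Relation.ReflTransGen IsHingeFlipA H H' ∧
      (∀ a, hDegA H' a = dA' a) ∧ (∀ b, hDegB H' b = dB b) ∧
      (∀ c, hDegC H' c = dC c) := by
  subst hdA'
  -- the target is almost flat
  have hd' : ∀ i j : Fin n₁, (if (j : ℕ) < m then k else k - 1)
      ≤ (if (i : ℕ) < m then k else k - 1) + 1 := by
    intro i j; split_ifs <;> omega
  -- the sum in ℚ of the current degrees equals α·n₁
  have hSα : (∑ i, (dA i : ℚ)) = α * n₁ := by
    rcases Nat.eq_zero_or_pos n₁ with h0 | h0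
    · subst h0; simp
    · rw [hα]
      field_simp
  -- value of the target sum
  have hS' : (∑ i : Fin n₁, if (i : ℕ) < m then k else k - 1)
      = m * k + (n₁ - m) * (k - 1) := by
    rw [Fin.sum_univ_eq_sum_range (fun x => if x < m then k else k - 1) n₁]
    have hsub : Finset.range m ⊆ Finset.range n₁ := Finset.range_subset_range.2 hm
    rw [← Finset.sum_sdiff hsub]
    have e1 : (∑ x ∈ Finset.range n₁ \ Finset.range m, if x < m then k else k - 1)
        = (n₁ - m) * (k - 1) := by
      rw [Finset.sum_congr rfl (fun x hx => by
        simp only [mem_sdiff, mem_range] at hx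
        rw [if_neg (by omega)]), Finset.sum_const, smul_eq_mul,
        Finset.card_sdiff_of_subset hsub, Finset.card_range, Finset.card_range]
    have e2 : (∑ x ∈ Finset.range m, if x < m then k else k - 1) = m * k := by
      rw [Finset.sum_congr rfl (fun x hx => by
        rw [if_pos (Finset.mem_range.1 hx)]), Finset.sum_const, smul_eq_mul,
        Finset.card_range]
    rw [e1, e2]
    ring
  -- the current sum equals the same value
  have hS : (∑ i, dA i) = m * k + (n₁ - m) * (k - 1) := by
    by_cases hk0 : k = 0
    · have hα0 : α ≤ 0 := Nat.ceil_eq_zero.1 (hk0 ▸ hk).symm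
      have h1 : (∑ i, (dA i : ℚ)) ≤ 0 := by
        rw [hSα]
        calc α * n₁ ≤ 0 * n₁ := mul_le_mul_of_nonneg_right hα0 (by positivity)
        _ = 0 := by ring
      have h2 : (0:ℚ) ≤ ∑ i, (dA i : ℚ) :=
        Finset.sum_nonneg (fun i _ => by positivity)
      have h3 : ((∑ i, dA i : ℕ) : ℚ) = 0 := by push_cast; linarith
      have h4 : (∑ i, dA i) = 0 := by exact_mod_cast h3
      subst hk0
      simpa using h4
    · have h1k : 1 ≤ k := Nat.one_le_iff_ne_zero.2 hk0
      have hcast : ((m * k + (n₁ - m) * (k - 1) : ℕ) : ℚ)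
          = (m : ℚ) * k + ((n₁ : ℚ) - m) * ((k : ℚ) - 1) := by
        push_cast [Nat.cast_sub hm, Nat.cast_sub h1k]
        ring
      have : ((∑ i, dA i : ℕ) : ℚ) = ((m * k + (n₁ - m) * (k - 1) : ℕ) : ℚ) := by
        rw [hcast, hmk, ← hSα]
        push_cast
        rfl
      exact_mod_cast this
  have hsum : (∑ i, hDegA H i) = ∑ i : Fin n₁, if (i : ℕ) < m then k else k - 1 := by
    rw [Finset.sum_congr rfl (fun i _ => hHA i), hS, hS']
  obtain ⟨H', hchain, hA', hB', hC'⟩ := hflip_key _ hd'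
    (∑ i, ((hDegA H i : ℤ) - ((if (i : ℕ) < m then k else k - 1 : ℕ) : ℤ)).natAbs)
    H le_rfl hsum
  exact ⟨H', hchain, hA',
    fun b => (hB' b).trans (hHB b), fun c => (hC' c).trans (hHC c)⟩
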